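/- If a cocyclic n-gon z₁,…,zₙ ∈ ℍ (n ≥ 3, all sidelengths positive) has maximal signed area compared to all n-gons with the same sidelengths, then it is oriented-convex. -/

import Mathlib

open Real Finset

noncomputable section

/-- Points of `ℝ³`. -/
abbrev V3 : Type := Fin 3 → ℝ

/-- The pseudo-Euclidean scalar product `⟨x,y⟩ = x₀y₀ − x₁y₁ − x₂y₂`. -/
def pscal (x y : V3) : ℝ := x 0 * y 0 - x 1 * y 1 - x 2 * y 2

/-- The hyperboloid model `ℍ` of the hyperbolic plane. -/
def Hyp : Set V3 := {x | pscal x x = 1 ∧ 0 < x 0}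

/-- Inverse hyperbolic cosine. -/
def arcoshR (x : ℝ) : ℝ := Real.log (x + Real.sqrt (x ^ 2 - 1))

/-- Hyperbolic distance `d(a,b) = arcosh ⟨a,b⟩`. -/
def dH (a b : V3) : ℝ := arcoshR (pscal a b)

/-- Determinant of the 3×3 matrix with columns `a`, `b`, `c`. -/
def det3 (a b c : V3) : ℝ :=
  a 0 * (b 1 * c 2 - b 2 * c 1) - b 0 * (a 1 * c 2 - a 2 * c 1) + c 0 * (a 1 * b 2 - a 2 * b 1)

/-- `S_ab = sinh(d(a,b)/2)`. -/
def SS (a b : V3) : ℝ := Real.sinh (dH a b / 2)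

/-- Signed area of the triangle `a b c`. -/
def triArea (a b c : V3) : ℝ :=
  2 * Real.arctan (det3 a b c / (pscal a b + pscal b c + pscal c a + 1))

/-- Signed area of the `n`-gon with vertices `z 1, …, z n`. -/
def polyArea (n : ℕ) (z : ℕ → V3) : ℝ :=
  ∑ k ∈ Finset.Ico 2 n, triArea (z 1) (z k) (z (k + 1))

/-- Cyclic successor on `{1, …, n}`. -/
def nxt (n k : ℕ) : ℕ := k % n + 1

/-- Oriented convexity of the `n`-gon `z 1, …, z n`. -/
def OrientedConvex (n : ℕ) (z : ℕ → V3) : Prop :=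
  ∀ k ∈ Finset.Icc 1 n, ∀ j ∈ Finset.Icc 1 n,
    j ≠ k → j ≠ nxt n k → 0 < det3 (z k) (z (nxt n k)) (z j)

/-- A set of points lies in a common 2-dimensional linear subspace of `ℝ³`. -/
def Collin (s : Set V3) : Prop :=
  ∃ W : Submodule ℝ V3, Module.finrank ℝ W = 2 ∧ ∀ x ∈ s, x ∈ W

/-- A set of points lies in a common affine plane of `ℝ³` not containing the origin. -/
def Cocyc (s : Set V3) : Prop :=
  ∃ u : V3, ∃ p : ℝ, u ≠ 0 ∧ p ≠ 0 ∧ ∀ x ∈ s, pscal u x = p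

-- basic algebra
lemma pscal_comm (x y : V3) : pscal x y = pscal y x := by unfold pscal; ring

lemma det3_cyc (x y z : V3) : det3 x y z = det3 y z x := by unfold det3; ring
lemma det3_swap13 (x y z : V3) : det3 x y z = - det3 z y x := by unfold det3; ring
lemma det3_swap12 (x y z : V3) : det3 x y z = - det3 y x z := by unfold det3; ring
lemma det3_aab (x y : V3) : det3 x x y = 0 := by unfold det3; ring
lemma det3_aba (x y : V3) : det3 x y x = 0 := by unfold det3; ring
lemma det3_abb (x y : V3) : det3 x y y = 0 := by unfold det3; ring

def mcross (x y : V3) : V3 :=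
  ![x 1 * y 2 - x 2 * y 1, x 0 * y 2 - x 2 * y 0, x 1 * y 0 - x 0 * y 1]

lemma pscal_mcross (x y z : V3) : pscal (mcross x y) z = det3 x y z := by
  simp only [pscal, det3, mcross]
  simp only [Matrix.cons_val_zero, Matrix.cons_val_one, Matrix.head_cons,
    Matrix.cons_val_two, Matrix.tail_cons]
  ring

lemma mcross_lagrange (x y : V3) :
    pscal (mcross x y) (mcross x y) = pscal x x * pscal y y - pscal x y ^ 2 := by
  simp only [pscal, mcross]
  simp only [Matrix.cons_val_zero, Matrix.cons_val_one, Matrix.head_cons,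
    Matrix.cons_val_two, Matrix.tail_cons]
  ring

-- pscal ≥ 1 on Hyp
lemma pscal_ge_one {x y : V3} (hx : x ∈ Hyp) (hy : y ∈ Hyp) : 1 ≤ pscal x y := by
  obtain ⟨hx1, hx0⟩ := hx; obtain ⟨hy1, hy0⟩ := hy
  simp only [pscal] at *
  by_cases hB : 1 + x 1 * y 1 + x 2 * y 2 ≤ 0
  · nlinarith [mul_pos hx0 hy0]
  · push_neg at hB
    nlinarith [mul_pos hx0 hy0, sq_nonneg (x 1 - y 1), sq_nonneg (x 2 - y 2),
      sq_nonneg (x 1 * y 2 - x 2 * y 1)]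

lemma pscal_eq_one_iff {x y : V3} (hx : x ∈ Hyp) (hy : y ∈ Hyp) : pscal x y = 1 ↔ x = y := by
  constructor
  · intro h
    obtain ⟨hx1, hx0⟩ := hx; obtain ⟨hy1, hy0⟩ := hy
    simp only [pscal] at *
    have key : (x 1 - y 1)^2 + (x 2 - y 2)^2 + (x 1 * y 2 - x 2 * y 1)^2 = 0 := by
      linear_combination (-(x 0 * x 0) + (x 0 * x 0 - x 1 * x 1 - x 2 * x 2 - 1)) * hy1
        + (-(y 0 * y 0)) * hx1
        + (2 * x 0 * y 0 - (x 0 * y 0 - x 1 * y 1 - x 2 * y 2 - 1)) * h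
    have e1 : x 1 = y 1 := by nlinarith [sq_nonneg (x 1 - y 1), sq_nonneg (x 2 - y 2), sq_nonneg (x 1 * y 2 - x 2 * y 1)]
    have e2 : x 2 = y 2 := by nlinarith [sq_nonneg (x 1 - y 1), sq_nonneg (x 2 - y 2), sq_nonneg (x 1 * y 2 - x 2 * y 1)]
    have hpr : (x 0 - y 0) * (x 0 + y 0) = 0 := by
      rw [e1, e2] at hx1; linear_combination hx1 - hy1
    have e0 : x 0 = y 0 := by
      rcases mul_eq_zero.1 hpr with h' | h'
      · linarith
      · linarith
    funext i; fin_cases i <;> simp [e0, e1, e2]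
  · rintro rfl; exact hy.1

lemma pscal_gt_one {x y : V3} (hx : x ∈ Hyp) (hy : y ∈ Hyp) (hne : x ≠ y) : 1 < pscal x y :=
  lt_of_le_of_ne (pscal_ge_one hx hy) (fun h => hne ((pscal_eq_one_iff hx hy).1 h.symm))

-- sheet lemma
lemma sheet_pos {y p : V3} (hy : pscal y y = 1) (hp : p ∈ Hyp) (hyp : 0 < pscal y p) :
    0 < y 0 := by
  obtain ⟨hp1, hp0⟩ := hp
  simp only [pscal] at *
  by_contra h
  push_neg at h
  have h2 : y 0 * p 0 ≤ 0 := mul_nonpos_iff.2 (Or.inr ⟨h, hp0.le⟩)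
  have hs : y 1 * p 1 + y 2 * p 2 < y 0 * p 0 := by linarith
  have hprod : 0 < (y 0 * p 0 - (y 1 * p 1 + y 2 * p 2)) * (-(y 0 * p 0 + (y 1 * p 1 + y 2 * p 2))) := by
    apply mul_pos (by linarith) (by linarith)
  nlinarith [sq_nonneg (y 1 * p 2 - y 2 * p 1), sq_nonneg (y 0), sq_nonneg (p 1), sq_nonneg (p 2)]

-- reflections
def prefl (v x : V3) : V3 := fun i => x i - (2 * pscal x v / pscal v v) * v i

lemma refl_pscal (v : V3) (hv : pscal v v ≠ 0) (x y : V3) :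
    pscal (prefl v x) (prefl v y) = pscal x y := by
  simp only [prefl, pscal] at *
  have hv' : v 0 ^ 2 - v 1 ^ 2 - v 2 ^ 2 ≠ 0 := by simpa [sq] using hv
  field_simp
  ring

lemma refl_det3 (v : V3) (hv : pscal v v ≠ 0) (x y z : V3) :
    det3 (prefl v x) (prefl v y) (prefl v z) = - det3 x y z := by
  simp only [prefl, det3, pscal] at *
  have hv' : v 0 ^ 2 - v 1 ^ 2 - v 2 ^ 2 ≠ 0 := by simpa [sq] using hv
  field_simp
  ring

lemma refl_fix (v x : V3) (h : pscal x v = 0) : prefl v x = x := by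
  funext i; simp [prefl, h]

lemma refl_invol (v : V3) (hv : pscal v v ≠ 0) (x : V3) : prefl v (prefl v x) = x := by
  funext i
  simp only [prefl, pscal] at *
  have hv' : v 0 ^ 2 - v 1 ^ 2 - v 2 ^ 2 ≠ 0 := by simpa [sq] using hv
  field_simp
  ring

-- arcoshR basics
lemma arcoshR_one : arcoshR 1 = 0 := by
  simp [arcoshR]

lemma dH_self_ne {a b : V3} (hab : pscal a b = 1) : dH a b = 0 := by
  simp [dH, hab, arcoshR_one]

-- triArea transformation
lemma triArea_map {M : V3 → V3} (h1 : ∀ x y, pscal (M x) (M y) = pscal x y)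
    (h2 : ∀ x y z, det3 (M x) (M y) (M z) = det3 x y z) (a b c : V3) :
    triArea (M a) (M b) (M c) = triArea a b c := by
  simp [triArea, h1, h2]

lemma triArea_refl_neg (v : V3) (hv : pscal v v ≠ 0) (a b c : V3) :
    triArea (prefl v a) (prefl v b) (prefl v c) = - triArea a b c := by
  simp only [triArea, refl_pscal v hv, refl_det3 v hv, neg_div, Real.arctan_neg]
  ring

lemma triArea_aab (a b : V3) : triArea a a b = 0 := by
  have : det3 a a b = 0 := by unfold det3; ring
  simp [triArea, this]

lemma triArea_aba (a b : V3) : triArea a b a = 0 := by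
  have : det3 a b a = 0 := by unfold det3; ring
  simp [triArea, this]

-- det3 linearity helpers
lemma det3_swap23 (x y z : V3) : det3 x y z = - det3 x z y := by unfold det3; ring
lemma det3_sub_smul (x v y w : V3) (r : ℝ) :
    det3 (fun i => x i - r * v i) y w = det3 x y w - r * det3 v y w := by
  unfold det3; simp only; ring
lemma det3_add_left (u v y w : V3) :
    det3 (fun i => u i + v i) y w = det3 u y w + det3 v y w := by
  unfold det3; simp only; ring
lemma pscal_add_right (x u v : V3) :
    pscal x (fun i => u i + v i) = pscal x u + pscal x v := by
  unfold pscal; simp only; ring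


def Dq (a b c : V3) : ℝ := pscal a b + pscal b c + pscal c a + 1

lemma key_re (a b c d : V3) (ha : pscal a a = 1) (hb : pscal b b = 1)
    (hc : pscal c c = 1) (hd : pscal d d = 1) :
    (Dq a b c * Dq a c d - det3 a b c * det3 a c d) * (1 + pscal b d) =
      (Dq a b d * Dq b c d - det3 a b d * det3 b c d) * (1 + pscal a c) := by
  simp only [Dq, pscal, det3] at *
  linear_combination ((1) * c 0 * c 2 * d 0 * d 2 + (1) * c 0 * c 1 * d 0 * d 1 + (1) * c 0 ^ 2 - (1) * c 0 ^ 2 * d 0 ^ 2 - (1) * b 2 * c 1 * c 2 * d 1 + (1) * b 2 * c 1 ^ 2 * d 2 + (1) * b 2 * c 0 * c 2 * d 0 - (1) * b 2 * c 0 ^ 2 * d 2 + (1) * b 2 ^ 2 * c 1 * c 2 * d 1 * d 2 - (1) * b 2 ^ 2 * c 1 ^ 2 * d 2 ^ 2 + (1) * b 2 ^ 2 * c 0 * c 1 * d 0 * d 1 - (1) * b 2 ^ 2 * c 0 ^ 2 * d 1 ^ 2 + (1) * b 1 * c 2 ^ 2 * d 1 - (1) * b 1 * c 1 * c 2 * d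 2 + (1) * b 1 * c 0 * c 1 * d 0 - (1) * b 1 * c 0 ^ 2 * d 1 - (1) * b 1 * b 2 * c 2 ^ 2 * d 1 * d 2 + (1) * b 1 * b 2 * c 1 * c 2 * d 2 ^ 2 + (1) * b 1 * b 2 * c 1 * c 2 * d 1 ^ 2 - (1) * b 1 * b 2 * c 1 ^ 2 * d 1 * d 2 - (1) * b 1 * b 2 * c 0 * c 2 * d 0 * d 1 - (1) * b 1 * b 2 * c 0 * c 1 * d 0 * d 2 + (2) * b 1 * b 2 * c 0 ^ 2 * d 1 * d 2 - (1) * b 1 ^ 2 * c 2 ^ 2 * d 1 ^ 2 + (1) * b 1 ^ 2 * c 1 * c 2 * d 1 * d 2 + (1) * b 1 ^ 2 * c 0 * c 2 * d 0 * d 2 - (1) * b 1 ^ 2 * c 0 ^ 2 * d 2 ^ 2 + (1) * b 0 * d 0 + (1) * b 0 * c 0 * c 2 * d 2 + (1) * b 0 * c 0 * c 1 * d 1 - (1) * b 0 * c 0 ^ 2 * d 0 - (1) * b 0 * b 2 * d 0 * d 2 - (1) * b 0 * b 2 * c 1 * c 2 * d 0 * d 1 + (1) * b 0 * b 2 * c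 1 ^ 2 * d 0 * d 2 + (1) * b 0 * b 2 * c 0 * c 2 + (1) * b 0 * b 2 * c 0 * c 2 * d 1 ^ 2 - (1) * b 0 * b 2 * c 0 * c 1 * d 1 * d 2 - (1) * b 0 * b 1 * d 0 * d 1 + (1) * b 0 * b 1 * c 2 ^ 2 * d 0 * d 1 - (1) * b 0 * b 1 * c 1 * c 2 * d 0 * d 2 - (1) * b 0 * b 1 * c 0 * c 2 * d 1 * d 2 + (1) * b 0 * b 1 * c 0 * c 1 + (1) * b 0 * b 1 * c 0 * c 1 * d 2 ^ 2 + (1) * b 0 ^ 2 * d 0 ^ 2 - (1) * b 0 ^ 2 * c 0 ^ 2) * ha + (- (1) * c 0 * c 2 * d 0 * d 2 - (1) * c 0 * c 1 * d 0 * d 1 - (1) * c 0 ^ 2 + (1) * c 0 ^ 2 * d 0 ^ 2 - (1) * a 2 * c 2 * d 1 ^ 2 + (1) * a 2 * c 2 * d 0 ^ 2 + (1) * a 2 * c 1 * d 1 * d 2 - (1) * a 2 * c 0 * d 0 * d 2 + (1) * a 2 ^ 2 * d 0 ^ 2 + (1) * a 2 ^ 2 * c 2 ^ 2 * d 1 ^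 2 - (1) * a 2 ^ 2 * c 1 * c 2 * d 1 * d 2 + (1) * a 2 ^ 2 * c 1 ^ 2 * d 0 ^ 2 - (1) * a 2 ^ 2 * c 0 * c 1 * d 0 * d 1 - (1) * a 2 ^ 2 * c 0 ^ 2 + (1) * a 1 * c 2 * d 1 * d 2 - (1) * a 1 * c 1 * d 2 ^ 2 + (1) * a 1 * c 1 * d 0 ^ 2 - (1) * a 1 * c 0 * d 0 * d 1 - (1) * a 1 * a 2 * c 2 ^ 2 * d 1 * d 2 + (1) * a 1 * a 2 * c 1 * c 2 * d 2 ^ 2 + (1) * a 1 * a 2 * c 1 * c 2 * d 1 ^ 2 - (2) * a 1 * a 2 * c 1 * c 2 * d 0 ^ 2 - (1) * a 1 * a 2 * c 1 ^ 2 * d 1 * d 2 + (1) * a 1 * a 2 * c 0 * c 2 * d 0 * d 1 + (1) * a 1 * a 2 * c 0 * c 1 * d 0 * d 2 + (1) * a 1 ^ 2 * d 0 ^ 2 + (1) * a 1 ^ 2 * c 2 ^ 2 * d 0 ^ 2 - (1) * a 1 ^ 2 * c 1 * c 2 * d 1 * d 2 + (1) * a 1 ^ 2 * c 1 ^ 2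 * d 2 ^ 2 - (1) * a 1 ^ 2 * c 0 * c 2 * d 0 * d 2 - (1) * a 1 ^ 2 * c 0 ^ 2 - (1) * a 0 * c 2 * d 0 * d 2 - (1) * a 0 * c 1 * d 0 * d 1 - (1) * a 0 * c 0 + (1) * a 0 * c 0 * d 0 ^ 2 - (1) * a 0 * a 2 * d 0 * d 2 + (1) * a 0 * a 2 * c 1 * c 2 * d 0 * d 1 - (1) * a 0 * a 2 * c 1 ^ 2 * d 0 * d 2 + (1) * a 0 * a 2 * c 0 * c 2 - (1) * a 0 * a 2 * c 0 * c 2 * d 1 ^ 2 + (1) * a 0 * a 2 * c 0 * c 1 * d 1 * d 2 - (1) * a 0 * a 1 * d 0 * d 1 - (1) * a 0 * a 1 * c 2 ^ 2 * d 0 * d 1 + (1) * a 0 * a 1 * c 1 * c 2 * d 0 * d 2 + (1) * a 0 * a 1 * c 0 * c 2 * d 1 * d 2 + (1) * a 0 * a 1 * c 0 * c 1 - (1) * a 0 * a 1 * c 0 * c 1 * d 2 ^ 2) * hb + (- (1) * b 2 * d 2 - (1) * b 2 ^ 2 - (1) * b 2 ^ 2 * d 1 ^ 2 + (1) * b 2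 ^ 2 * d 0 ^ 2 - (1) * b 1 * d 1 + (2) * b 1 * b 2 * d 1 * d 2 - (1) * b 1 ^ 2 - (1) * b 1 ^ 2 * d 2 ^ 2 + (1) * b 1 ^ 2 * d 0 ^ 2 - (1) * b 0 * b 2 * d 0 * d 2 - (1) * b 0 * b 1 * d 0 * d 1 - (1) * a 2 ^ 2 * d 0 ^ 2 - (1) * a 2 ^ 2 * b 2 * d 2 - (1) * a 2 ^ 2 * b 2 ^ 2 - (1) * a 2 ^ 2 * b 2 ^ 2 * d 1 ^ 2 + (1) * a 2 ^ 2 * b 1 * b 2 * d 1 * d 2 - (1) * a 2 ^ 2 * b 1 ^ 2 - (1) * a 2 ^ 2 * b 1 ^ 2 * d 2 ^ 2 - (1) * a 2 ^ 2 * b 1 ^ 2 * d 1 ^ 2 - (1) * a 2 ^ 2 * b 0 * d 0 + (1) * a 2 ^ 2 * b 0 * b 1 * d 0 * d 1 - (1) * a 1 * a 2 * b 2 * d 1 + (1) * a 1 * a 2 * b 2 ^ 2 * d 1 * d 2 - (1) * a 1 * a 2 * b 1 * d 2 + (1) * a 1 * a 2 * b 1 * b 2 * d 2 ^ 2 + (1)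 * a 1 * a 2 * b 1 * b 2 * d 1 ^ 2 + (1) * a 1 * a 2 * b 1 ^ 2 * d 1 * d 2 - (1) * a 1 * a 2 * b 0 * b 2 * d 0 * d 1 - (1) * a 1 * a 2 * b 0 * b 1 * d 0 * d 2 - (1) * a 1 ^ 2 * d 0 ^ 2 - (1) * a 1 ^ 2 * b 2 ^ 2 - (1) * a 1 ^ 2 * b 2 ^ 2 * d 2 ^ 2 - (1) * a 1 ^ 2 * b 2 ^ 2 * d 1 ^ 2 - (1) * a 1 ^ 2 * b 1 * d 1 + (1) * a 1 ^ 2 * b 1 * b 2 * d 1 * d 2 - (1) * a 1 ^ 2 * b 1 ^ 2 - (1) * a 1 ^ 2 * b 1 ^ 2 * d 2 ^ 2 - (1) * a 1 ^ 2 * b 0 * d 0 + (1) * a 1 ^ 2 * b 0 * b 2 * d 0 * d 2 + (1) * a 0 * a 2 * d 0 * d 2 + (1) * a 0 * a 2 * b 2 * d 0 - (1) * a 0 * a 2 * b 1 * b 2 * d 0 * d 1 + (1) * a 0 * a 2 * b 1 ^ 2 * d 0 * d 2 + (1) * a 0 * a 2 * b 0 * d 2 + (1) * a 0 * a 2 *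 b 0 * b 2 + (1) * a 0 * a 2 * b 0 * b 2 * d 1 ^ 2 - (1) * a 0 * a 2 * b 0 * b 1 * d 1 * d 2 + (1) * a 0 * a 1 * d 0 * d 1 + (1) * a 0 * a 1 * b 2 ^ 2 * d 0 * d 1 + (1) * a 0 * a 1 * b 1 * d 0 - (1) * a 0 * a 1 * b 1 * b 2 * d 0 * d 2 + (1) * a 0 * a 1 * b 0 * d 1 - (1) * a 0 * a 1 * b 0 * b 2 * d 1 * d 2 + (1) * a 0 * a 1 * b 0 * b 1 + (1) * a 0 * a 1 * b 0 * b 1 * d 2 ^ 2) * hc + ((1) * b 2 ^ 2 + (1) * b 2 ^ 2 * c 2 ^ 2 + (1) * b 2 ^ 2 * c 1 ^ 2 + (1) * b 1 ^ 2 + (1) * b 1 ^ 2 * c 2 ^ 2 + (1) * b 1 ^ 2 * c 1 ^ 2 - (1) * b 0 * b 2 * c 0 * c 2 - (1) * b 0 * b 1 * c 0 * c 1 + (1) * a 2 * c 2 + (1) * a 2 * b 2 ^ 2 * c 2 + (1) * a 2 * b 1 * b 2 * c 1 - (1) * a 2 * b 0 * b 2 * c 0 - (1) * a 2 ^ 2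 * c 2 ^ 2 + (1) * a 2 ^ 2 * b 2 ^ 2 + (1) * a 2 ^ 2 * b 2 ^ 2 * c 1 ^ 2 - (1) * a 2 ^ 2 * b 1 * b 2 * c 1 * c 2 + (1) * a 2 ^ 2 * b 1 ^ 2 + (1) * a 2 ^ 2 * b 1 ^ 2 * c 2 ^ 2 + (1) * a 2 ^ 2 * b 1 ^ 2 * c 1 ^ 2 - (1) * a 2 ^ 2 * b 0 * b 1 * c 0 * c 1 + (1) * a 1 * c 1 + (1) * a 1 * b 1 * b 2 * c 2 + (1) * a 1 * b 1 ^ 2 * c 1 - (1) * a 1 * b 0 * b 1 * c 0 - (2) * a 1 * a 2 * c 1 * c 2 - (1) * a 1 * a 2 * b 2 ^ 2 * c 1 * c 2 - (1) * a 1 * a 2 * b 1 * b 2 * c 2 ^ 2 - (1) * a 1 * a 2 * b 1 * b 2 * c 1 ^ 2 - (1) * a 1 * a 2 * b 1 ^ 2 * c 1 * c 2 + (1) * a 1 * a 2 * b 0 * b 2 * c 0 * c 1 + (1) * a 1 * a 2 * b 0 * b 1 * c 0 * c 2 - (1) * a 1 ^ 2 * c 1 ^ 2 + (1) * a 1 ^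 2 * b 2 ^ 2 + (1) * a 1 ^ 2 * b 2 ^ 2 * c 2 ^ 2 + (1) * a 1 ^ 2 * b 2 ^ 2 * c 1 ^ 2 - (1) * a 1 ^ 2 * b 1 * b 2 * c 1 * c 2 + (1) * a 1 ^ 2 * b 1 ^ 2 + (1) * a 1 ^ 2 * b 1 ^ 2 * c 2 ^ 2 - (1) * a 1 ^ 2 * b 0 * b 2 * c 0 * c 2 + (1) * a 0 * b 2 ^ 2 * c 0 + (1) * a 0 * b 1 ^ 2 * c 0 - (1) * a 0 * b 0 * b 2 * c 2 - (1) * a 0 * b 0 * b 1 * c 1 + (1) * a 0 * a 2 * c 0 * c 2 + (1) * a 0 * a 2 * b 1 * b 2 * c 0 * c 1 - (1) * a 0 * a 2 * b 1 ^ 2 * c 0 * c 2 - (1) * a 0 * a 2 * b 0 * b 2 - (1) * a 0 * a 2 * b 0 * b 2 * c 1 ^ 2 + (1) * a 0 * a 2 * b 0 * b 1 * c 1 * c 2 + (1) * a 0 * a 1 * c 0 * c 1 - (1) * a 0 * a 1 * b 2 ^ 2 * c 0 * c 1 + (1) * a 0 * a 1 * b 1 * b 2 * c 0 * c 2 + (1)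 * a 0 * a 1 * b 0 * b 2 * c 1 * c 2 - (1) * a 0 * a 1 * b 0 * b 1 - (1) * a 0 * a 1 * b 0 * b 1 * c 2 ^ 2) * hd

lemma key_im (a b c d : V3) (ha : pscal a a = 1) (hb : pscal b b = 1)
    (hc : pscal c c = 1) (hd : pscal d d = 1) :
    (Dq a b c * det3 a c d + det3 a b c * Dq a c d) * (1 + pscal b d) =
      (Dq a b d * det3 b c d + det3 a b d * Dq b c d) * (1 + pscal a c) := by
  simp only [Dq, pscal, det3] at *
  linear_combination (- (1) * c 0 * c 2 * d 1 + (1) * c 0 * c 1 * d 2 - (1) * b 2 * c 1 * d 0 + (1) * b 2 * c 0 * d 1 - (1) * b 2 * c 0 * c 1 - (1) * b 2 * c 0 * c 1 * d 2 ^ 2 - (1) * b 2 * c 0 * c 1 * d 1 ^ 2 + (1) * b 2 * c 0 * c 1 * d 0 ^ 2 + (1) * b 2 ^ 2 * c 1 * d 0 * d 2 - (1) * b 2 ^ 2 * c 0 * d 1 * d 2 - (1) * b 2 ^ 2 * c 0 * c 2 * d 1 + (1) * b 2 ^ 2 * c 0 * c 1 * d 2 + (1) * b 1 * c 2 * d 0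 - (1) * b 1 * c 0 * d 2 + (1) * b 1 * c 0 * c 2 + (1) * b 1 * c 0 * c 2 * d 2 ^ 2 + (1) * b 1 * c 0 * c 2 * d 1 ^ 2 - (1) * b 1 * c 0 * c 2 * d 0 ^ 2 - (1) * b 1 * b 2 * c 2 * d 0 * d 2 + (1) * b 1 * b 2 * c 1 * d 0 * d 1 + (1) * b 1 * b 2 * c 0 * d 2 ^ 2 - (1) * b 1 * b 2 * c 0 * d 1 ^ 2 - (1) * b 1 ^ 2 * c 2 * d 0 * d 1 + (1) * b 1 ^ 2 * c 0 * d 1 * d 2 - (1) * b 1 ^ 2 * c 0 * c 2 * d 1 + (1) * b 1 ^ 2 * c 0 * c 1 * d 2 - (1) * b 0 * c 2 * d 1 + (1) * b 0 * c 1 * d 2 + (1) * b 0 * b 2 * c 2 * d 1 * d 2 - (1) * b 0 * b 2 * c 1 * d 2 ^ 2 - (1) * b 0 * b 2 * c 1 * d 0 ^ 2 + (1) * b 0 * b 2 * c 0 * d 0 * d 1 + (1) * b 0 * b 1 * c 2 * d 1 ^ 2 + (1) * b 0 * b 1 * c 2 * d 0 ^ 2 - (1) * b 0 * b 1 * c 1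 * d 1 * d 2 - (1) * b 0 * b 1 * c 0 * d 0 * d 2 - (1) * b 0 ^ 2 * c 2 * d 0 * d 1 + (1) * b 0 ^ 2 * c 1 * d 0 * d 2 + (1) * b 0 ^ 2 * c 0 * c 2 * d 1 - (1) * b 0 ^ 2 * c 0 * c 1 * d 2) * ha + ((1) * c 0 * c 2 * d 1 - (1) * c 0 * c 1 * d 2 - (1) * a 2 * d 0 * d 1 - (1) * a 2 * c 2 ^ 2 * d 0 * d 1 + (1) * a 2 * c 1 * d 0 - (1) * a 2 * c 1 ^ 2 * d 0 * d 1 - (1) * a 2 * c 0 * d 1 + (1) * a 2 * c 0 ^ 2 * d 0 * d 1 - (1) * a 2 ^ 2 * c 1 * c 2 * d 0 + (2) * a 2 ^ 2 * c 0 * c 2 * d 1 - (1) * a 2 ^ 2 * c 0 * c 1 * d 2 + (1) * a 1 * d 0 * d 2 - (1) * a 1 * c 2 * d 0 + (1) * a 1 * c 2 ^ 2 * d 0 * d 2 + (1) * a 1 * c 1 ^ 2 * d 0 * d 2 + (1) * a 1 * c 0 * d 2 - (1) * a 1 * c 0 ^ 2 * d 0 * d 2 + (1) * a 1 * a 2 *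 c 2 ^ 2 * d 0 - (1) * a 1 * a 2 * c 1 ^ 2 * d 0 - (1) * a 1 * a 2 * c 0 * c 2 * d 2 + (1) * a 1 * a 2 * c 0 * c 1 * d 1 + (1) * a 1 ^ 2 * c 1 * c 2 * d 0 + (1) * a 1 ^ 2 * c 0 * c 2 * d 1 - (2) * a 1 ^ 2 * c 0 * c 1 * d 2 + (1) * a 0 * c 2 * d 1 - (1) * a 0 * c 1 * d 2 - (1) * a 0 * a 2 * c 2 ^ 2 * d 1 + (1) * a 0 * a 2 * c 1 * c 2 * d 2 + (1) * a 0 * a 2 * c 0 * c 1 * d 0 - (1) * a 0 * a 2 * c 0 ^ 2 * d 1 - (1) * a 0 * a 1 * c 1 * c 2 * d 1 + (1) * a 0 * a 1 * c 1 ^ 2 * d 2 - (1) * a 0 * a 1 * c 0 * c 2 * d 0 + (1) * a 0 * a 1 * c 0 ^ 2 * d 2) * hb + ((1) * a 2 * d 0 * d 1 + (1) * a 2 * b 2 ^ 2 * d 0 * d 1 - (1) * a 2 * b 1 * d 0 + (1) * a 2 * b 1 * b 2 * d 0 * d 2 + (2) * a 2 * b 1 ^ 2 * d 0 * d 1 +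 (1) * a 2 * b 0 * d 1 - (1) * a 2 * b 0 * b 2 * d 1 * d 2 - (1) * a 2 * b 0 * b 1 * d 1 ^ 2 - (1) * a 2 * b 0 * b 1 * d 0 ^ 2 - (1) * a 1 * d 0 * d 2 + (1) * a 1 * b 2 * d 0 - (2) * a 1 * b 2 ^ 2 * d 0 * d 2 - (1) * a 1 * b 1 * b 2 * d 0 * d 1 - (1) * a 1 * b 1 ^ 2 * d 0 * d 2 - (1) * a 1 * b 0 * d 2 + (1) * a 1 * b 0 * b 2 * d 2 ^ 2 + (1) * a 1 * b 0 * b 2 * d 0 ^ 2 + (1) * a 1 * b 0 * b 1 * d 1 * d 2 - (1) * a 0 * b 2 * d 1 + (1) * a 0 * b 2 ^ 2 * d 1 * d 2 + (1) * a 0 * b 1 * d 2 - (1) * a 0 * b 1 * b 2 * d 2 ^ 2 + (1) * a 0 * b 1 * b 2 * d 1 ^ 2 - (1) * a 0 * b 1 ^ 2 * d 1 * d 2 - (1) * a 0 * b 0 * b 2 * d 0 * d 1 + (1) * a 0 * b 0 * b 1 * d 0 * d 2 - (1) * a 0 * a 2 * b 1 - (1) * a 0 * a 2 * b 1 * d 2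 ^ 2 - (1) * a 0 * a 2 * b 1 * d 1 ^ 2 + (1) * a 0 * a 2 * b 1 * d 0 ^ 2 + (1) * a 0 * a 1 * b 2 + (1) * a 0 * a 1 * b 2 * d 2 ^ 2 + (1) * a 0 * a 1 * b 2 * d 1 ^ 2 - (1) * a 0 * a 1 * b 2 * d 0 ^ 2) * hc + ((1) * b 2 * c 0 * c 1 - (1) * b 1 * c 0 * c 2 + (1) * a 2 * b 1 * c 0 - (1) * a 2 * b 0 * c 1 + (1) * a 2 ^ 2 * b 2 * c 0 * c 1 - (2) * a 2 ^ 2 * b 1 * c 0 * c 2 + (1) * a 2 ^ 2 * b 0 * c 1 * c 2 - (1) * a 1 * b 2 * c 0 + (1) * a 1 * b 0 * c 2 + (1) * a 1 * a 2 * b 2 * c 0 * c 2 - (1) * a 1 * a 2 * b 1 * c 0 * c 1 - (1) * a 1 * a 2 * b 0 * c 2 ^ 2 + (1) * a 1 * a 2 * b 0 * c 1 ^ 2 + (2) * a 1 ^ 2 * b 2 * c 0 * c 1 - (1) * a 1 ^ 2 * b 1 * c 0 * c 2 - (1) * a 1 ^ 2 * b 0 * c 1 * c 2 + (1) * a 0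 * b 2 * c 1 - (1) * a 0 * b 1 * c 2 - (1) * a 0 * a 2 * b 2 * c 1 * c 2 + (1) * a 0 * a 2 * b 1 + (2) * a 0 * a 2 * b 1 * c 2 ^ 2 + (1) * a 0 * a 2 * b 1 * c 1 ^ 2 - (1) * a 0 * a 2 * b 0 * c 0 * c 1 - (1) * a 0 * a 1 * b 2 - (1) * a 0 * a 1 * b 2 * c 2 ^ 2 - (2) * a 0 * a 1 * b 2 * c 1 ^ 2 + (1) * a 0 * a 1 * b 1 * c 1 * c 2 + (1) * a 0 * a 1 * b 0 * c 0 * c 2) * hd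

lemma Dq_pos {a b c : V3} (ha : a ∈ Hyp) (hb : b ∈ Hyp) (hc : c ∈ Hyp) : 0 < Dq a b c := by
  have h1 := pscal_ge_one ha hb
  have h2 := pscal_ge_one hb hc
  have h3 := pscal_ge_one hc ha
  unfold Dq; linarith

def Zc (a b c : V3) : ℂ := (Dq a b c : ℂ) + (det3 a b c : ℂ) * Complex.I

lemma Zc_re (a b c : V3) : (Zc a b c).re = Dq a b c := by simp [Zc]
lemma Zc_im (a b c : V3) : (Zc a b c).im = det3 a b c := by simp [Zc]

lemma Zc_arg {a b c : V3} (ha : a ∈ Hyp) (hb : b ∈ Hyp) (hc : c ∈ Hyp) :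
    triArea a b c = 2 * (Zc a b c).arg := by
  have hD := Dq_pos ha hb hc
  have hre : 0 < (Zc a b c).re := by rwa [Zc_re]
  have habs : |(Zc a b c).arg| < π / 2 := Complex.abs_arg_lt_pi_div_two_iff.2 (Or.inl hre)
  have := Complex.tan_arg (Zc a b c)
  have harg : Real.arctan (Real.tan (Zc a b c).arg) = (Zc a b c).arg :=
    Real.arctan_tan (by cases abs_lt.1 habs; linarith) (by cases abs_lt.1 habs; linarith)
  rw [triArea, ← harg, this, Zc_re, Zc_im]
  rfl

lemma Zc_arg_abs {a b c : V3} (ha : a ∈ Hyp) (hb : b ∈ Hyp) (hc : c ∈ Hyp) :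
    |(Zc a b c).arg| < π / 2 := by
  have hD := Dq_pos ha hb hc
  exact Complex.abs_arg_lt_pi_div_two_iff.2 (Or.inl (by rwa [Zc_re]))

lemma Zc_ne_zero {a b c : V3} (ha : a ∈ Hyp) (hb : b ∈ Hyp) (hc : c ∈ Hyp) :
    Zc a b c ≠ 0 := by
  intro h
  have := Dq_pos ha hb hc
  have : (Zc a b c).re = 0 := by rw [h]; simp
  rw [Zc_re] at this; linarith

lemma Zc_mul_key {a b c d : V3} (ha : a ∈ Hyp) (hb : b ∈ Hyp) (hc : c ∈ Hyp) (hd : d ∈ Hyp) :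
    ((1 + pscal b d : ℝ) : ℂ) * (Zc a b c * Zc a c d) =
      ((1 + pscal a c : ℝ) : ℂ) * (Zc a b d * Zc b c d) := by
  apply Complex.ext
  · simp only [Complex.mul_re, Complex.ofReal_re, Complex.ofReal_im, Zc, Complex.add_re,
      Complex.add_im, Complex.mul_im, Complex.I_re, Complex.I_im]
    ring_nf
    nlinarith [key_re a b c d ha.1 hb.1 hc.1 hd.1]
  · simp only [Complex.mul_re, Complex.ofReal_re, Complex.ofReal_im, Zc, Complex.add_re,
      Complex.add_im, Complex.mul_im, Complex.I_re, Complex.I_im]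
    ring_nf
    nlinarith [key_im a b c d ha.1 hb.1 hc.1 hd.1]

lemma cocycle {a b c d : V3} (ha : a ∈ Hyp) (hb : b ∈ Hyp) (hc : c ∈ Hyp) (hd : d ∈ Hyp) :
    triArea a b c + triArea a c d = triArea a b d + triArea b c d := by
  have h1 := Zc_ne_zero ha hb hc
  have h2 := Zc_ne_zero ha hc hd
  have h3 := Zc_ne_zero ha hb hd
  have h4 := Zc_ne_zero hb hc hd
  have hbd : (0:ℝ) < 1 + pscal b d := by have := pscal_ge_one hb hd; linarith
  have hac : (0:ℝ) < 1 + pscal a c := by have := pscal_ge_one ha hc; linarith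
  have hargeq : (Zc a b c * Zc a c d).arg = (Zc a b d * Zc b c d).arg := by
    rw [← Complex.arg_real_mul (Zc a b c * Zc a c d) hbd,
        ← Complex.arg_real_mul (Zc a b d * Zc b c d) hac,
        Zc_mul_key ha hb hc hd]
  have hA1 := Complex.arg_mul_coe_angle h1 h2
  have hA2 := Complex.arg_mul_coe_angle h3 h4
  rw [hargeq, hA2] at hA1
  have hA1' : (((Zc a b c).arg + (Zc a c d).arg : ℝ) : Real.Angle)
      = (((Zc a b d).arg + (Zc b c d).arg : ℝ) : Real.Angle) := by
    push_cast [Real.Angle.coe_add] at hA1 ⊢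
    exact hA1.symm
  obtain ⟨k, hk⟩ := Real.Angle.angle_eq_iff_two_pi_dvd_sub.1 hA1'
  have b1 := Zc_arg_abs ha hb hc
  have b2 := Zc_arg_abs ha hc hd
  have b3 := Zc_arg_abs ha hb hd
  have b4 := Zc_arg_abs hb hc hd
  have hpi := Real.pi_pos
  have hk0 : k = 0 := by
    by_contra hkne
    have h1' : (1:ℝ) ≤ |(k:ℝ)| := by
      have : (1:ℤ) ≤ |k| := Int.one_le_abs hkne
      calc (1:ℝ) = ((1:ℤ):ℝ) := by norm_num
        _ ≤ ((|k|:ℤ):ℝ) := by exact_mod_cast this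
        _ = |(k:ℝ)| := by push_cast; ring
    have : |((Zc a b c).arg + (Zc a c d).arg) - ((Zc a b d).arg + (Zc b c d).arg)| < 2 * π := by
      cases abs_lt.1 b1; cases abs_lt.1 b2; cases abs_lt.1 b3; cases abs_lt.1 b4
      rw [abs_lt]; constructor <;> linarith
    rw [hk] at this
    have : |2 * π * (k:ℝ)| = 2 * π * |(k:ℝ)| := by
      rw [abs_mul]; congr 1; rw [abs_of_pos]; linarith
    nlinarith [abs_nonneg ((k:ℝ))]
  rw [hk0] at hk
  simp at hk
  rw [Zc_arg ha hb hc, Zc_arg ha hc hd, Zc_arg ha hb hd, Zc_arg hb hc hd]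
  linarith
def sig (n s k : ℕ) : ℕ := (k - 1 + s) % n + 1

lemma sig_mem {n s k : ℕ} (hn : 0 < n) : sig n s k ∈ Finset.Icc 1 n := by
  simp only [sig, Finset.mem_Icc]
  have := Nat.mod_lt (k - 1 + s) hn
  omega

lemma nxt_mem {n k : ℕ} (hn : 0 < n) : nxt n k ∈ Finset.Icc 1 n := by
  simp only [nxt, Finset.mem_Icc]
  have := Nat.mod_lt k hn
  omega

lemma nxt_of_lt {n k : ℕ} (h1 : 1 ≤ k) (h2 : k < n) : nxt n k = k + 1 := by
  simp [nxt, Nat.mod_eq_of_lt h2]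

lemma nxt_self {n : ℕ} (hn : 0 < n) : nxt n n = 1 := by
  simp [nxt, Nat.mod_self]

lemma sig_nxt {n s k : ℕ} (hk : 1 ≤ k) : sig n s (nxt n k) = nxt n (sig n s k) := by
  simp only [sig, nxt]
  have e1 : k % n + 1 - 1 = k % n := by omega
  have e2 : k - 1 + s + 1 = k + s := by omega
  rw [e1, Nat.mod_add_mod, Nat.mod_add_mod, e2]

lemma sig_sig_inv {n s k : ℕ} (hs : s ≤ n) (hk : k ∈ Finset.Icc 1 n) :
    sig n (n - s) (sig n s k) = k := by
  simp only [Finset.mem_Icc] at hk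
  simp only [sig]
  rw [show (k - 1 + s) % n + 1 - 1 = (k - 1 + s) % n by omega, Nat.mod_add_mod,
    show k - 1 + s + (n - s) = k - 1 + n by omega, Nat.add_mod_right,
    Nat.mod_eq_of_lt (by omega)]
  omega

lemma sig_inv_sig {n s k : ℕ} (hs : s ≤ n) (hk : k ∈ Finset.Icc 1 n) :
    sig n s (sig n (n - s) k) = k := by
  have h := sig_sig_inv (k := k) (s := n - s) (by omega) hk
  rwa [show n - (n - s) = s by omega] at h

lemma nxt_eq_sig1 {n k : ℕ} (hk : 1 ≤ k) : nxt n k = sig n 1 k := by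
  simp only [nxt, sig]
  have e : k - 1 + 1 = k := by omega
  rw [e]

lemma sum_sig (n s : ℕ) (hn : 0 < n) (hs : s ≤ n) (g : ℕ → ℝ) :
    ∑ k ∈ Finset.Icc 1 n, g (sig n s k) = ∑ k ∈ Finset.Icc 1 n, g k := by
  apply Finset.sum_nbij' (i := fun k => sig n s k) (j := fun k => sig n (n - s) k)
  · intro a _; exact sig_mem hn
  · intro a _; exact sig_mem hn
  · intro a ha; exact sig_sig_inv hs ha
  · intro a ha; exact sig_inv_sig hs ha
  · intro a _; rfl

def fanA (p : V3) (n : ℕ) (z : ℕ → V3) : ℝ :=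
  ∑ k ∈ Finset.Icc 1 n, triArea p (z k) (z (nxt n k))

lemma polyArea_eq_fan {n : ℕ} (hn : 3 ≤ n) (z : ℕ → V3) : polyArea n z = fanA (z 1) n z := by
  have h1 : Finset.Icc 1 n = insert 1 (Finset.Icc 2 n) := by ext m; simp; omega
  have h2 : Finset.Icc 2 n = insert n (Finset.Ico 2 n) := by ext m; simp; omega
  rw [fanA, h1, Finset.sum_insert (by simp), h2, Finset.sum_insert (by simp)]
  rw [triArea_aab, nxt_self (show 0 < n by omega), triArea_aba]
  have h3 : (∑ k ∈ Finset.Ico 2 n, triArea (z 1) (z k) (z (nxt n k)))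
      = ∑ k ∈ Finset.Ico 2 n, triArea (z 1) (z k) (z (k + 1)) := by
    apply Finset.sum_congr rfl
    intro k hk
    simp only [Finset.mem_Ico] at hk
    rw [nxt_of_lt (by omega) (by omega)]
  rw [h3, polyArea]
  ring

lemma fan_rebase {n : ℕ} (hn : 3 ≤ n) {z : ℕ → V3} (hz : ∀ k ∈ Finset.Icc 1 n, z k ∈ Hyp)
    {p q : V3} (hp : p ∈ Hyp) (hq : q ∈ Hyp) : fanA p n z = fanA q n z := by
  have key : ∀ k ∈ Finset.Icc 1 n,
      triArea p (z k) (z (nxt n k)) - triArea q (z k) (z (nxt n k))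
      = triArea p q (z (nxt n k)) - triArea p q (z k) := by
    intro k hk
    have h := cocycle hp hq (hz k hk) (hz (nxt n k) (nxt_mem (by omega)))
    linarith
  have hsum : fanA p n z - fanA q n z
      = (∑ k ∈ Finset.Icc 1 n, triArea p q (z (nxt n k)))
        - ∑ k ∈ Finset.Icc 1 n, triArea p q (z k) := by
    rw [fanA, fanA, ← Finset.sum_sub_distrib, ← Finset.sum_sub_distrib]
    exact Finset.sum_congr rfl key
  have hre : (∑ k ∈ Finset.Icc 1 n, triArea p q (z (nxt n k)))
      = ∑ k ∈ Finset.Icc 1 n, triArea p q (z k) := by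
    have h4 : (∑ k ∈ Finset.Icc 1 n, triArea p q (z (nxt n k)))
        = ∑ k ∈ Finset.Icc 1 n, triArea p q (z (sig n 1 k)) := by
      apply Finset.sum_congr rfl
      intro k hk
      simp only [Finset.mem_Icc] at hk
      rw [nxt_eq_sig1 hk.1]
    rw [h4]
    exact sum_sig n 1 (by omega) (by omega) (fun m => triArea p q (z m))
  have := hsum
  rw [hre] at this
  linarith

lemma polyArea_shift {n : ℕ} (hn : 3 ≤ n) {z : ℕ → V3} (hz : ∀ k ∈ Finset.Icc 1 n, z k ∈ Hyp)
    {s : ℕ} (hs : s ≤ n) : polyArea n (fun k => z (sig n s k)) = polyArea n z := by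
  set z' : ℕ → V3 := fun k => z (sig n s k) with hz'
  have hz'mem : ∀ k ∈ Finset.Icc 1 n, z' k ∈ Hyp := fun k _ => hz _ (sig_mem (by omega))
  rw [polyArea_eq_fan hn z', polyArea_eq_fan hn z]
  rw [fan_rebase hn hz'mem (hz'mem 1 (by simp; omega)) (hz 1 (by simp; omega))]
  rw [fanA, fanA]
  have h5 : (∑ k ∈ Finset.Icc 1 n, triArea (z 1) (z' k) (z' (nxt n k)))
      = ∑ k ∈ Finset.Icc 1 n, triArea (z 1) (z (sig n s k)) (z (nxt n (sig n s k))) := by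
    apply Finset.sum_congr rfl
    intro k hk
    simp only [Finset.mem_Icc] at hk
    simp only [hz']
    rw [sig_nxt hk.1]
  rw [h5]
  exact sum_sig n s (by omega) hs (fun m => triArea (z 1) (z m) (z (nxt n m)))
/-- maximality property -/
def MaxP (n : ℕ) (z : ℕ → V3) : Prop :=
  ∀ w : ℕ → V3, (∀ k ∈ Finset.Icc 1 n, w k ∈ Hyp) →
    (∀ k ∈ Finset.Icc 1 n, dH (w k) (w (nxt n k)) = dH (z k) (z (nxt n k))) →
    polyArea n w ≤ polyArea n z

lemma sig_n {n a : ℕ} (ha : a ∈ Finset.Icc 1 n) : sig n a n = a := by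
  simp only [Finset.mem_Icc] at ha
  simp only [sig]
  rw [show n - 1 + a = a - 1 + n by omega, Nat.add_mod_right, Nat.mod_eq_of_lt (by omega)]
  omega

/-- The chain move: apply an isometry `M` fixing `z n` to the chain `z 1, …, z b`. -/
lemma chain_move {n : ℕ} (hn : 3 ≤ n) {z : ℕ → V3}
    (hz : ∀ k ∈ Finset.Icc 1 n, z k ∈ Hyp)
    {M : V3 → V3}
    (hM1 : ∀ x y, pscal (M x) (M y) = pscal x y)
    (hM2 : ∀ x y w, det3 (M x) (M y) (M w) = det3 x y w)
    (hMH : ∀ x, x ∈ Hyp → M x ∈ Hyp)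
    (hMn : M (z n) = z n)
    {b : ℕ} (hb1 : 1 ≤ b) (hb2 : b ≤ n - 2)
    (hMb : pscal (M (z b)) (z (b + 1)) = pscal (z b) (z (b + 1))) :
    (∀ k ∈ Finset.Icc 1 n, (fun k => if k ≤ b then M (z k) else z k) k ∈ Hyp) ∧
    (∀ k ∈ Finset.Icc 1 n,
      dH ((fun k => if k ≤ b then M (z k) else z k) k)
        ((fun k => if k ≤ b then M (z k) else z k) (nxt n k))
        = dH (z k) (z (nxt n k))) ∧
    polyArea n (fun k => if k ≤ b then M (z k) else z k)
      = polyArea n z + (triArea (z n) (M (z b)) (z (b + 1)) - triArea (z n) (z b) (z (b + 1))) := by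
  set w : ℕ → V3 := fun k => if k ≤ b then M (z k) else z k with hw
  have hzn : z n ∈ Hyp := hz n (by simp; omega)
  have hwH : ∀ k ∈ Finset.Icc 1 n, w k ∈ Hyp := by
    intro k hk
    simp only [hw]
    by_cases h : k ≤ b
    · simp only [h, if_pos]; exact hMH _ (hz k hk)
    · simp only [h, if_neg, if_false]; exact hz k hk
  have hwP : ∀ k ∈ Finset.Icc 1 n, pscal (w k) (w (nxt n k)) = pscal (z k) (z (nxt n k)) := by
    intro k hk
    simp only [Finset.mem_Icc] at hk
    rcases lt_trichotomy k b with hlt | heq | hgt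
    · -- k < b : both mapped
      have hkn : k < n := by omega
      rw [nxt_of_lt hk.1 hkn]
      have e1 : w k = M (z k) := by simp [hw, le_of_lt hlt]
      have e2 : w (k + 1) = M (z (k + 1)) := by simp [hw, Nat.succ_le_of_lt hlt]
      rw [e1, e2, hM1]
    · -- k = b
      subst heq
      rw [nxt_of_lt hk.1 (by omega)]
      have e1 : w k = M (z k) := by simp [hw]
      have e2 : w (k + 1) = z (k + 1) := by simp [hw]
      rw [e1, e2, hMb]
    · -- k > b
      rcases eq_or_lt_of_le hk.2 with hkn | hkn
      · -- k = n
        subst hkn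
        rw [nxt_self (by omega)]
        have e1 : w k = z k := by simp [hw]; omega
        have e2 : w 1 = M (z 1) := by simp [hw]; omega
        rw [e1, e2]
        calc pscal (z k) (M (z 1)) = pscal (M (z k)) (M (z 1)) := by rw [hMn]
          _ = pscal (z k) (z 1) := hM1 _ _
      · rw [nxt_of_lt hk.1 hkn]
        have e1 : w k = z k := by simp [hw]; omega
        have e2 : w (k + 1) = z (k + 1) := by simp [hw]; omega
        rw [e1, e2]
  refine ⟨hwH, ?_, ?_⟩
  · intro k hk
    rw [dH, dH, hwP k hk]
  · -- area computation
    rw [polyArea_eq_fan hn w, polyArea_eq_fan hn z]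
    rw [fan_rebase hn hwH (hwH 1 (by simp; omega)) hzn]
    rw [fan_rebase hn hz (hz 1 (by simp; omega)) hzn]
    have key : ∀ k ∈ Finset.Icc 1 n, k ≠ b →
        triArea (z n) (w k) (w (nxt n k)) - triArea (z n) (z k) (z (nxt n k)) = 0 := by
      intro k hk hkb
      simp only [Finset.mem_Icc] at hk
      rcases lt_trichotomy k b with hlt | heq | hgt
      · have hkn : k < n := by omega
        rw [nxt_of_lt hk.1 hkn]
        have e1 : w k = M (z k) := by simp [hw, le_of_lt hlt]
        have e2 : w (k + 1) = M (z (k + 1)) := by simp [hw, Nat.succ_le_of_lt hlt]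
        have e3 : triArea (z n) (M (z k)) (M (z (k + 1))) = triArea (z n) (z k) (z (k + 1)) := by
          conv_lhs => rw [← hMn]
          exact triArea_map hM1 hM2 _ _ _
        rw [e1, e2, e3]
        ring
      · exact absurd heq hkb
      · rcases eq_or_lt_of_le hk.2 with hkn | hkn
        · subst hkn
          rw [nxt_self (by omega)]
          have e1 : w k = z k := by simp [hw]; omega
          rw [e1, triArea_aab, triArea_aab]
          ring
        · rw [nxt_of_lt hk.1 hkn]
          have e1 : w k = z k := by simp [hw]; omega
          have e2 : w (k + 1) = z (k + 1) := by simp [hw]; omega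
          rw [e1, e2]
          ring
    have hsplit : fanA (z n) n w - fanA (z n) n z
        = triArea (z n) (w b) (w (nxt n b)) - triArea (z n) (z b) (z (nxt n b)) := by
      rw [fanA, fanA, ← Finset.sum_sub_distrib]
      rw [Finset.sum_eq_single b key (fun hb => absurd (by simp; omega : b ∈ Finset.Icc 1 n) hb)]
    have e1 : w b = M (z b) := by simp [hw]
    have e2 : w (nxt n b) = z (b + 1) := by
      rw [nxt_of_lt hb1 (by omega)]
      simp [hw]
    have e3 : nxt n b = b + 1 := nxt_of_lt hb1 (by omega)
    rw [e1, e2, e3] at hsplit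
    linarith

/-- Normalized main lemma. -/
lemma main0 {n : ℕ} (hn : 3 ≤ n) {z : ℕ → V3}
    (hz : ∀ k ∈ Finset.Icc 1 n, z k ∈ Hyp) (hmax : MaxP n z)
    {b : ℕ} (hb1 : 1 ≤ b) (hb2 : b ≤ n - 2) :
    0 ≤ det3 (z n) (z b) (z (b + 1)) := by
  by_cases h1 : z n = z b
  · rw [h1, det3_aab]
  by_cases h2 : z n = z (b + 1)
  · rw [h2, det3_cyc, det3_abb]
  have hzn : z n ∈ Hyp := hz n (by simp; omega)
  have hzb : z b ∈ Hyp := hz b (by simp; omega)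
  have hzb1 : z (b+1) ∈ Hyp := hz (b+1) (by simp; omega)
  have hq1 : 1 < pscal (z n) (z (b+1)) := pscal_gt_one hzn hzb1 h2
  have hq2 : 1 < pscal (z n) (z b) := pscal_gt_one hzn hzb h1
  set v : V3 := mcross (z n) (z (b+1)) with hv
  set v2 : V3 := mcross (z n) (z b) with hv2
  have hvv : pscal v v ≠ 0 := by
    rw [hv, mcross_lagrange, hzn.1, hzb1.1]
    nlinarith
  have hv2v2 : pscal v2 v2 ≠ 0 := by
    rw [hv2, mcross_lagrange, hzn.1, hzb.1]
    nlinarith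
  set M : V3 → V3 := fun x => prefl v (prefl v2 x) with hM
  have hM1 : ∀ x y, pscal (M x) (M y) = pscal x y := by
    intro x y; rw [hM]; simp only
    rw [refl_pscal v hvv, refl_pscal v2 hv2v2]
  have hM2 : ∀ x y w, det3 (M x) (M y) (M w) = det3 x y w := by
    intro x y w; rw [hM]; simp only
    rw [refl_det3 v hvv, refl_det3 v2 hv2v2, neg_neg]
  have hfixn2 : prefl v2 (z n) = z n := by
    apply refl_fix
    rw [pscal_comm, hv2, pscal_mcross, det3_aba]
  have hfixn1 : prefl v (z n) = z n := by
    apply refl_fix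
    rw [pscal_comm, hv, pscal_mcross, det3_aba]
  have hMn : M (z n) = z n := by rw [hM]; simp only [hfixn2, hfixn1]
  have hMH : ∀ x, x ∈ Hyp → M x ∈ Hyp := by
    intro x hx
    have hpp : pscal (M x) (M x) = 1 := by rw [hM1]; exact hx.1
    have hpos : 0 < pscal (M x) (z n) := by
      calc (0:ℝ) < 1 := one_pos
      _ ≤ pscal x (z n) := pscal_ge_one hx hzn
      _ = pscal (M x) (M (z n)) := (hM1 x (z n)).symm
      _ = pscal (M x) (z n) := by rw [hMn]
    exact ⟨hpp, sheet_pos hpp hzn hpos⟩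
  have hfixb : prefl v2 (z b) = z b := by
    apply refl_fix
    rw [pscal_comm, hv2, pscal_mcross, det3_abb]
  have hfixb1 : prefl v (z (b+1)) = z (b+1) := by
    apply refl_fix
    rw [pscal_comm, hv, pscal_mcross, det3_abb]
  have hMb' : M (z b) = prefl v (z b) := by rw [hM]; simp only [hfixb]
  have hMb : pscal (M (z b)) (z (b + 1)) = pscal (z b) (z (b + 1)) := by
    rw [hMb', ← hfixb1, refl_pscal v hvv, hfixb1]
  obtain ⟨hwH, hwS, hwA⟩ := chain_move hn hz hM1 hM2 hMH hMn hb1 hb2 hMb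
  have hle := hmax _ hwH hwS
  rw [hwA] at hle
  have hneg : triArea (z n) (M (z b)) (z (b + 1)) = - triArea (z n) (z b) (z (b + 1)) := by
    rw [hMb', ← hfixn1, ← hfixb1, ← refl_invol v hvv (z b)]
    rw [triArea_refl_neg v hvv]
    rw [refl_invol v hvv, hfixn1, hfixb1]
  rw [hneg] at hle
  have hA : 0 ≤ triArea (z n) (z b) (z (b + 1)) := by linarith
  by_contra hdet
  push_neg at hdet
  have hD := Dq_pos hzn hzb hzb1
  have : triArea (z n) (z b) (z (b+1)) < 0 := by
    rw [triArea]
    have : det3 (z n) (z b) (z (b+1)) / Dq (z n) (z b) (z (b+1)) < 0 :=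
      div_neg_of_neg_of_pos hdet hD
    have harct : Real.arctan (det3 (z n) (z b) (z (b+1)) / (pscal (z n) (z b) + pscal (z b) (z (b+1)) + pscal (z (b+1)) (z n) + 1)) < Real.arctan 0 := by
      apply Real.arctan_strictMono
      rw [show pscal (z n) (z b) + pscal (z b) (z (b+1)) + pscal (z (b+1)) (z n) + 1 = Dq (z n) (z b) (z (b+1)) from rfl]
      exact this
    rw [Real.arctan_zero] at harct
    linarith
  linarith

/-- Transport of hypotheses along a cyclic shift. -/
lemma transport {n : ℕ} (hn : 3 ≤ n) {z : ℕ → V3}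
    (hz : ∀ k ∈ Finset.Icc 1 n, z k ∈ Hyp)
    (hpos : ∀ k ∈ Finset.Icc 1 n, 0 < dH (z k) (z (nxt n k)))
    (hmax : MaxP n z) {a : ℕ} (ha : a ∈ Finset.Icc 1 n) :
    (∀ k ∈ Finset.Icc 1 n, (fun k => z (sig n a k)) k ∈ Hyp) ∧
    (∀ k ∈ Finset.Icc 1 n, 0 < dH ((fun k => z (sig n a k)) k) ((fun k => z (sig n a k)) (nxt n k))) ∧
    MaxP n (fun k => z (sig n a k)) := by
  simp only [Finset.mem_Icc] at ha
  set z' : ℕ → V3 := fun k => z (sig n a k) with hz'def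
  have hz' : ∀ k ∈ Finset.Icc 1 n, z' k ∈ Hyp := fun k _ => hz _ (sig_mem (by omega))
  have hside : ∀ k ∈ Finset.Icc 1 n, z' (nxt n k) = z (nxt n (sig n a k)) := by
    intro k hk
    simp only [Finset.mem_Icc] at hk
    simp only [hz'def]
    rw [sig_nxt hk.1]
  refine ⟨hz', ?_, ?_⟩
  · intro k hk
    rw [hside k hk]
    exact hpos _ (sig_mem (by omega))
  · intro w' hw'H hw'S
    set w : ℕ → V3 := fun k => w' (sig n (n - a) k) with hwdef
    have hwH : ∀ k ∈ Finset.Icc 1 n, w k ∈ Hyp := fun k _ => hw'H _ (sig_mem (by omega))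
    have hwS : ∀ k ∈ Finset.Icc 1 n, dH (w k) (w (nxt n k)) = dH (z k) (z (nxt n k)) := by
      intro k hk
      simp only [Finset.mem_Icc] at hk
      have hm : sig n (n - a) k ∈ Finset.Icc 1 n := sig_mem (by omega)
      have hm1 : 1 ≤ sig n (n - a) k := (Finset.mem_Icc.1 hm).1
      have e2 := hw'S _ hm
      have goal' : dH (w k) (w (nxt n k))
          = dH (w' (sig n (n - a) k)) (w' (nxt n (sig n (n - a) k))) := by
        simp only [hwdef]
        rw [sig_nxt hk.1]
      rw [goal', e2]
      simp only [hz'def]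
      rw [sig_nxt hm1, sig_inv_sig (by omega) (by simp; omega)]
    have hle := hmax w hwH hwS
    have eA1 : polyArea n w = polyArea n w' := polyArea_shift hn hw'H (by omega)
    have eA2 : polyArea n z' = polyArea n z := polyArea_shift hn hz (by omega)
    rw [eA1] at hle
    rw [eA2]
    exact hle

/-- Main lemma : every vertex lies weakly to the left of every directed edge. -/
lemma main_ineq {n : ℕ} (hn : 3 ≤ n) {z : ℕ → V3}
    (hz : ∀ k ∈ Finset.Icc 1 n, z k ∈ Hyp)
    (hpos : ∀ k ∈ Finset.Icc 1 n, 0 < dH (z k) (z (nxt n k)))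
    (hmax : MaxP n z) {a b : ℕ} (ha : a ∈ Finset.Icc 1 n) (hb : b ∈ Finset.Icc 1 n)
    (h1 : a ≠ b) (h2 : a ≠ nxt n b) :
    0 ≤ det3 (z b) (z (nxt n b)) (z a) := by
  obtain ⟨hz', hpos', hmax'⟩ := transport hn hz hpos hmax ha
  simp only [Finset.mem_Icc] at ha hb
  set b' : ℕ := sig n (n - a) b with hb'def
  have hb'mem : b' ∈ Finset.Icc 1 n := sig_mem (by omega)
  have hsig : sig n a b' = b := sig_inv_sig (by omega) (by simp; omega)
  have hb'n : b' ≠ n := by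
    intro h
    apply h1
    rw [← hsig, h, sig_n (by simp; omega)]
  have hb'n1 : b' ≠ n - 1 := by
    intro h
    apply h2
    have : nxt n b' = n := by
      rw [h, nxt_of_lt (by omega) (by omega)]
      omega
    have := sig_nxt (n := n) (s := a) (k := b') (by
      have := (Finset.mem_Icc.1 hb'mem).1; omega)
    rw [hsig] at this
    rw [‹nxt n b' = n›] at this
    rw [← this, sig_n (by simp; omega)]
  have hb'1 : 1 ≤ b' := (Finset.mem_Icc.1 hb'mem).1
  have hb'2 : b' ≤ n - 2 := by
    have := (Finset.mem_Icc.1 hb'mem).2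
    omega
  have h0 := main0 hn hz' hmax' hb'1 hb'2
  rw [sig_n (by simp; omega), hsig] at h0
  have hb'lt : b' + 1 = nxt n b' := (nxt_of_lt hb'1 (by omega)).symm
  rw [hb'lt, sig_nxt hb'1, hsig] at h0
  rw [det3_cyc] at h0
  exact h0
lemma side_ne {n : ℕ} (hn : 0 < n) {z : ℕ → V3} (hz : ∀ k ∈ Finset.Icc 1 n, z k ∈ Hyp)
    (hpos : ∀ k ∈ Finset.Icc 1 n, 0 < dH (z k) (z (nxt n k))) {k : ℕ}
    (hk : k ∈ Finset.Icc 1 n) : z k ≠ z (nxt n k) := by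
  intro h
  have h1 : pscal (z k) (z (nxt n k)) = 1 :=
    (pscal_eq_one_iff (hz k hk) (hz _ (nxt_mem hn))).2 h
  have := hpos k hk
  rw [dH, h1, arcoshR_one] at this
  exact lt_irrefl 0 this

/-- Cramer's rule : a vector orthogonal to a basis is zero. -/
lemma cramer {x y w e : V3} (hdet : det3 x y w ≠ 0) (h1 : pscal x e = 0)
    (h2 : pscal y e = 0) (h3 : pscal w e = 0) : ∀ i, e i = 0 := by
  have k0 : e 0 * det3 x y w = 0 := by
    simp only [pscal, det3] at h1 h2 h3 ⊢
    linear_combination (y 1 * w 2 - y 2 * w 1) * h1 + (x 2 * w 1 - x 1 * w 2) * h2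
      + (x 1 * y 2 - x 2 * y 1) * h3
  have k1 : e 1 * det3 x y w = 0 := by
    simp only [pscal, det3] at h1 h2 h3 ⊢
    linear_combination (y 0 * w 2 - y 2 * w 0) * h1 + (x 2 * w 0 - x 0 * w 2) * h2
      + (x 0 * y 2 - x 2 * y 0) * h3
  have k2 : e 2 * det3 x y w = 0 := by
    simp only [pscal, det3] at h1 h2 h3 ⊢
    linear_combination (y 1 * w 0 - y 0 * w 1) * h1 + (x 0 * w 1 - x 1 * w 0) * h2
      + (x 1 * y 0 - x 0 * y 1) * h3
  intro i
  fin_cases i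
  · exact (mul_eq_zero.1 k0).resolve_right hdet
  · exact (mul_eq_zero.1 k1).resolve_right hdet
  · exact (mul_eq_zero.1 k2).resolve_right hdet

/-- Three linearly dependent cocyclic points on `ℍ` : the third equals one of the others. -/
lemma dep_two_eq {x y d u : V3} {p : ℝ} (hx : x ∈ Hyp) (hy : y ∈ Hyp) (hd : d ∈ Hyp)
    (hp : p ≠ 0) (hux : pscal u x = p) (huy : pscal u y = p) (hud : pscal u d = p)
    (hxy : x ≠ y) (hdet : det3 x y d = 0) : d = x ∨ d = y := by
  set c : ℝ := pscal x y with hc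
  have hc1 : 1 < c := pscal_gt_one hx hy hxy
  have hden : 1 - c^2 ≠ 0 := by nlinarith
  set s : ℝ := (pscal x d - c * pscal y d) / (1 - c^2) with hs
  set t : ℝ := (pscal y d - c * pscal x d) / (1 - c^2) with ht
  set e : V3 := fun i => d i - s * x i - t * y i with he
  set m : V3 := mcross x y with hm
  have hmm : pscal m m = 1 - c^2 := by
    rw [hm, mcross_lagrange, hx.1, hy.1]; ring
  have hdetm : det3 x y m ≠ 0 := by
    have : det3 x y m = pscal m m := by rw [← pscal_mcross x y m]
    rw [this, hmm]; exact hden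
  have hpe1 : pscal x e = 0 := by
    have expand : pscal x e = pscal x d - s * pscal x x - t * pscal x y := by
      simp only [he, pscal]; ring
    rw [expand, hx.1, ← hc, hs, ht]
    field_simp
    ring
  have hpe2 : pscal y e = 0 := by
    have expand : pscal y e = pscal y d - s * pscal y x - t * pscal y y := by
      simp only [he, pscal]; ring
    rw [expand, hy.1, pscal_comm y x, ← hc, hs, ht]
    field_simp
    ring
  have hpe3 : pscal m e = 0 := by
    have expand : pscal m e = pscal m d - s * pscal m x - t * pscal m y := by
      simp only [he, pscal]; ring
    rw [expand, hm, pscal_mcross, pscal_mcross, pscal_mcross, det3_aba, det3_abb, hdet]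
    ring
  have hzero := cramer hdetm hpe1 hpe2 hpe3
  have hde : ∀ i, d i = s * x i + t * y i := by
    intro i
    have := hzero i
    simp only [he] at this
    linarith
  have hst : s + t = 1 := by
    have hud' : pscal u d = s * pscal u x + t * pscal u y := by
      simp only [pscal]
      rw [hde 0, hde 1, hde 2]
      ring
    rw [hux, huy, hud] at hud'
    have : (s + t - 1) * p = 0 := by linarith [hud']
    rcases mul_eq_zero.1 this with h | h
    · linarith
    · exact absurd h hp
  have hdd : s^2 + t^2 + 2 * s * t * c = 1 := by
    have : pscal d d = s^2 * pscal x x + 2 * s * t * pscal x y + t^2 * pscal y y := by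
      simp only [pscal]
      rw [hde 0, hde 1, hde 2]
      ring
    rw [hd.1, hx.1, hy.1, ← hc] at this
    linarith
  have hst0 : s * t = 0 := by
    have : 2 * s * t * (c - 1) = 0 := by nlinarith [hst, hdd]
    rcases mul_eq_zero.1 this with h | h
    · rcases mul_eq_zero.1 h with h' | h'
      · rcases mul_eq_zero.1 h' with h'' | h''
        · norm_num at h''
        · rw [h'']; ring
      · rw [h']; ring
    · nlinarith
  rcases mul_eq_zero.1 hst0 with h | h
  · right
    have ht1 : t = 1 := by rw [h] at hst; linarith
    funext i
    rw [hde i, h, ht1]; ring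
  · left
    have hs1 : s = 1 := by rw [h] at hst; linarith
    funext i
    rw [hde i, h, hs1]; ring
/-- A pinched maximal polygon is impossible (normalized version : `z n = z j`). -/
lemma pinch0 {n : ℕ} (hn : 3 ≤ n) {z : ℕ → V3}
    (hz : ∀ k ∈ Finset.Icc 1 n, z k ∈ Hyp)
    (hpos : ∀ k ∈ Finset.Icc 1 n, 0 < dH (z k) (z (nxt n k)))
    (hmax : MaxP n z) (hcyc : Cocyc (z '' Set.Icc 1 n))
    {j : ℕ} (hj : j ∈ Finset.Icc 1 n) (hjn : j ≠ n) (heq : z n = z j) : False := by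
  have hn0 : (0:ℕ) < n := by omega
  simp only [Finset.mem_Icc] at hj
  have hj2 : 2 ≤ j := by
    rcases Nat.lt_or_ge j 2 with h | h
    · exfalso
      have hj1 : j = 1 := by omega
      have := side_ne hn0 hz hpos (k := n) (by simp; omega)
      rw [nxt_self hn0] at this
      rw [hj1] at heq
      exact this heq
    · exact h
  have hjn2 : j ≤ n - 2 := by
    rcases Nat.lt_or_ge (n - 2) j with h | h
    · exfalso
      have hj1 : j = n - 1 := by omega
      have := side_ne hn0 hz hpos (k := n - 1) (by simp; omega)
      rw [nxt_of_lt (by omega) (by omega), show n - 1 + 1 = n by omega] at this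
      rw [hj1] at heq
      exact this heq.symm
    · exact h
  have hmemn : z n ∈ Hyp := hz n (by simp; omega)
  have hmemn1 : z (n-1) ∈ Hyp := hz (n-1) (by simp; omega)
  have hmemj1 : z (j-1) ∈ Hyp := hz (j-1) (by simp; omega)
  -- propagation : z (j-1) = z (n-1)
  have inst1 : 0 ≤ det3 (z (n-1)) (z n) (z (j-1)) := by
    have h := main_ineq hn hz hpos hmax (a := j-1) (b := n-1)
      (by simp; omega) (by simp; omega) (by omega)
      (by rw [nxt_of_lt (by omega) (by omega)]; omega)
    rwa [nxt_of_lt (by omega) (by omega), show n - 1 + 1 = n by omega] at h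
  have inst2 : 0 ≤ det3 (z (j-1)) (z j) (z (n-1)) := by
    have h := main_ineq hn hz hpos hmax (a := n-1) (b := j-1)
      (by simp; omega) (by simp; omega) (by omega)
      (by rw [nxt_of_lt (by omega) (by omega)]; omega)
    rwa [nxt_of_lt (by omega) (by omega), show j - 1 + 1 = j by omega] at h
  have hdet0 : det3 (z (n-1)) (z n) (z (j-1)) = 0 := by
    have e : det3 (z (j-1)) (z j) (z (n-1)) = - det3 (z (n-1)) (z n) (z (j-1)) := by
      rw [← heq, det3_swap13]
    rw [e] at inst2
    linarith
  obtain ⟨u, p, hu, hp, hplane⟩ := hcyc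
  have hplane' : ∀ m, m ∈ Finset.Icc 1 n → pscal u (z m) = p := by
    intro m hm
    apply hplane
    simp only [Finset.mem_Icc] at hm
    exact ⟨m, by simp [Set.mem_Icc]; omega, rfl⟩
  have hne1 : z (n-1) ≠ z n := by
    have := side_ne hn0 hz hpos (k := n-1) (by simp; omega)
    rwa [nxt_of_lt (by omega) (by omega), show n - 1 + 1 = n by omega] at this
  have hprop := dep_two_eq hmemn1 hmemn hmemj1 hp
    (hplane' (n-1) (by simp; omega)) (hplane' n (by simp; omega))
    (hplane' (j-1) (by simp; omega)) hne1 hdet0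
  have hxeq : z (j-1) = z (n-1) := by
    rcases hprop with h | h
    · exact h
    · exfalso
      have := side_ne hn0 hz hpos (k := j-1) (by simp; omega)
      rw [nxt_of_lt (by omega) (by omega), show j - 1 + 1 = j by omega] at this
      rw [heq] at h
      exact this h
  -- the rotation argument
  set c : V3 := z n with hcdef
  set x : V3 := z (n-1) with hxdef
  have hcx : c ≠ x := hne1.symm
  have hq : 1 < pscal c x := pscal_gt_one hmemn hmemn1 hcx
  set q : ℝ := pscal c x with hqdef
  set v2 : V3 := mcross c x with hv2
  set w2 : V3 := mcross c v2 with hw2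
  set v1 : V3 := fun i => v2 i + w2 i with hv1
  have hcv2 : pscal c v2 = 0 := by rw [pscal_comm, hv2, pscal_mcross, det3_aba]
  have hxv2 : pscal x v2 = 0 := by rw [pscal_comm, hv2, pscal_mcross, det3_abb]
  have hv2v2 : pscal v2 v2 = 1 - q^2 := by
    rw [hv2, mcross_lagrange, hmemn.1, hmemn1.1, ← hqdef]; ring
  have hv2v2ne : pscal v2 v2 ≠ 0 := by rw [hv2v2]; nlinarith
  have hw2w2 : pscal w2 w2 = 1 - q^2 := by
    rw [hw2, mcross_lagrange, hmemn.1, hcv2, hv2v2]; ring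
  have hv2w2 : pscal v2 w2 = 0 := by rw [pscal_comm, hw2, pscal_mcross, det3_abb]
  have hcw2 : pscal c w2 = 0 := by rw [pscal_comm, hw2, pscal_mcross, det3_aba]
  have hv1v1 : pscal v1 v1 = 2 * (1 - q^2) := by
    have expand : pscal v1 v1 = pscal v2 v2 + 2 * pscal v2 w2 + pscal w2 w2 := by
      simp only [hv1, pscal]; ring
    rw [expand, hv2v2, hv2w2, hw2w2]; ring
  have hv1v1ne : pscal v1 v1 ≠ 0 := by rw [hv1v1]; nlinarith
  have hcv1 : pscal c v1 = 0 := by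
    have expand : pscal c v1 = pscal c v2 + pscal c w2 := by
      simp only [hv1, pscal]; ring
    rw [expand, hcv2, hcw2]; ring
  have hxw2 : pscal x w2 = q^2 - 1 := by
    rw [pscal_comm, hw2, pscal_mcross, det3_swap23, hv2]
    rw [← pscal_mcross, ← hv2, hv2v2]
    ring
  have hxv1 : pscal x v1 = q^2 - 1 := by
    have expand : pscal x v1 = pscal x v2 + pscal x w2 := by
      simp only [hv1, pscal]; ring
    rw [expand, hxv2, hxw2]; ring
  have hdv1cx : det3 v1 c x = 1 - q^2 := by
    rw [hv1, det3_add_left]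
    have e1 : det3 v2 c x = 1 - q^2 := by
      rw [det3_cyc, ← pscal_mcross c x v2, ← hv2, pscal_comm, hv2v2]
    have e2 : det3 w2 c x = 0 := by
      rw [det3_cyc, ← pscal_mcross c x w2, ← hv2, hv2w2]
    rw [e1, e2]; ring
  set M : V3 → V3 := fun y => prefl v1 (prefl v2 y) with hM
  have hfixc2 : prefl v2 c = c := refl_fix _ _ hcv2
  have hfixc1 : prefl v1 c = c := refl_fix _ _ hcv1
  have hMc : M c = c := by rw [hM]; simp only [hfixc2, hfixc1]
  have hM1 : ∀ a b, pscal (M a) (M b) = pscal a b := by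
    intro a b; rw [hM]; simp only
    rw [refl_pscal v1 hv1v1ne, refl_pscal v2 hv2v2ne]
  have hM2 : ∀ a b d, det3 (M a) (M b) (M d) = det3 a b d := by
    intro a b d; rw [hM]; simp only
    rw [refl_det3 v1 hv1v1ne, refl_det3 v2 hv2v2ne, neg_neg]
  have hMH : ∀ y, y ∈ Hyp → M y ∈ Hyp := by
    intro y hy
    have hpp : pscal (M y) (M y) = 1 := by rw [hM1]; exact hy.1
    have hpos' : 0 < pscal (M y) c := by
      calc (0:ℝ) < 1 := one_pos
      _ ≤ pscal y c := pscal_ge_one hy hmemn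
      _ = pscal (M y) (M c) := (hM1 y c).symm
      _ = pscal (M y) c := by rw [hMc]
    exact ⟨hpp, sheet_pos hpp hmemn hpos'⟩
  -- chain move with M on the chain 1..j-1
  have hNn : M (z n) = z n := hMc
  have hNb : pscal (M (z (j-1))) (z (j-1+1)) = pscal (z (j-1)) (z (j-1+1)) := by
    rw [show j - 1 + 1 = j by omega, ← heq]
    calc pscal (M (z (j-1))) (z n) = pscal (M (z (j-1))) (M (z n)) := by rw [hNn]
      _ = pscal (z (j-1)) (z n) := hM1 _ _
  obtain ⟨hwH, hwS, hwA⟩ := chain_move hn hz hM1 hM2 hMH hNn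
    (b := j-1) (by omega) (by omega) hNb
  set w : ℕ → V3 := fun k => if k ≤ j-1 then M (z k) else z k with hwdef
  have hAeq : polyArea n w = polyArea n z := by
    rw [hwA]
    have e1 : triArea (z n) (M (z (j-1))) (z (j-1+1)) = 0 := by
      rw [show j - 1 + 1 = j by omega, ← heq, triArea_aba]
    have e2 : triArea (z n) (z (j-1)) (z (j-1+1)) = 0 := by
      rw [show j - 1 + 1 = j by omega, ← heq, triArea_aba]
    rw [e1, e2]; ring
  have hwpos : ∀ k ∈ Finset.Icc 1 n, 0 < dH (w k) (w (nxt n k)) := by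
    intro k hk
    rw [hwS k hk]
    exact hpos k hk
  have hwmax : MaxP n w := by
    intro v hvH hvS
    rw [hAeq]
    apply hmax v hvH
    intro k hk
    rw [hvS k hk, hwS k hk]
  have h := main_ineq hn hwH hwpos hwmax (a := n-1) (b := j-1)
    (by simp; omega) (by simp; omega) (by omega)
    (by rw [nxt_of_lt (by omega) (by omega)]; omega)
  rw [nxt_of_lt (by omega) (by omega), show j - 1 + 1 = j by omega] at h
  have ew1 : w (j-1) = M (z (j-1)) := by simp [hwdef]
  have ew2 : w j = z j := by simp [hwdef]; omega
  have ew3 : w (n-1) = z (n-1) := by simp [hwdef]; omega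
  rw [ew1, ew2, ew3, ← heq, hxeq, ← hxdef] at h
  -- h : 0 ≤ det3 (M x) c x ; now compute this determinant
  have hMx : M x = prefl v1 x := by
    rw [hM]; simp only
    rw [refl_fix v2 x hxv2]
  have hexp : det3 (M x) c x
      = det3 x c x - (2 * pscal x v1 / pscal v1 v1) * det3 v1 c x := by
    rw [hMx]
    exact det3_sub_smul x v1 c x _
  rw [det3_aba, hxv1, hv1v1, hdv1cx] at hexp
  have hval : det3 (M x) c x = 1 - q^2 := by
    have h2 : (2:ℝ) * (1 - q^2) ≠ 0 := by nlinarith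
    have hr : 2 * (q ^ 2 - 1) / (2 * (1 - q ^ 2)) = -1 := by
      rw [div_eq_iff h2]; ring
    rw [hexp, hr]; ring
  rw [hval] at h
  nlinarith

/-- No two vertices of a maximal cocyclic polygon coincide. -/
lemma pinch {n : ℕ} (hn : 3 ≤ n) {z : ℕ → V3}
    (hz : ∀ k ∈ Finset.Icc 1 n, z k ∈ Hyp)
    (hpos : ∀ k ∈ Finset.Icc 1 n, 0 < dH (z k) (z (nxt n k)))
    (hmax : MaxP n z) (hcyc : Cocyc (z '' Set.Icc 1 n))
    {i j : ℕ} (hi : i ∈ Finset.Icc 1 n) (hj : j ∈ Finset.Icc 1 n)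
    (hij : i ≠ j) (heq : z i = z j) : False := by
  obtain ⟨hz', hpos', hmax'⟩ := transport hn hz hpos hmax hi
  set z' : ℕ → V3 := fun k => z (sig n i k) with hz'def
  simp only [Finset.mem_Icc] at hi hj
  set j' : ℕ := sig n (n - i) j with hj'def
  have hj'mem : j' ∈ Finset.Icc 1 n := sig_mem (by omega)
  have hsig : sig n i j' = j := sig_inv_sig (by omega) (by simp; omega)
  have hj'n : j' ≠ n := by
    intro h
    apply hij
    rw [← hsig, h, sig_n (by simp; omega)]
  have hcyc' : Cocyc (z' '' Set.Icc 1 n) := by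
    obtain ⟨u, p, hu, hp, hplane⟩ := hcyc
    refine ⟨u, p, hu, hp, ?_⟩
    rintro x ⟨m, hm, rfl⟩
    apply hplane
    refine ⟨sig n i m, ?_, rfl⟩
    have := Finset.mem_Icc.1 (sig_mem (n := n) (s := i) (k := m) (by omega))
    simp [Set.mem_Icc]
    omega
  have heq' : z' n = z' j' := by
    simp only [hz'def]
    rw [sig_n (by simp; omega), hsig]
    exact heq
  exact pinch0 hn hz' hpos' hmax' hcyc' hj'mem hj'n heq'

/-- Lemma 4.8: a cocyclic maximal `n`-gon is oriented-convex. -/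
theorem maximal_cocyclic_is_oriented_convex (n : ℕ) (hn : 3 ≤ n) (z : ℕ → V3)
    (hz : ∀ k ∈ Finset.Icc 1 n, z k ∈ Hyp)
    (hpos : ∀ k ∈ Finset.Icc 1 n, 0 < dH (z k) (z (nxt n k)))
    (hcyc : Cocyc (z '' Set.Icc 1 n))
    (hmax : ∀ w : ℕ → V3, (∀ k ∈ Finset.Icc 1 n, w k ∈ Hyp) →
      (∀ k ∈ Finset.Icc 1 n, dH (w k) (w (nxt n k)) = dH (z k) (z (nxt n k))) →
      polyArea n w ≤ polyArea n z) :
    OrientedConvex n z := by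
  intro k hk j hj hjk hjnk
  have hmax' : MaxP n z := hmax
  have weak := main_ineq hn hz hpos hmax' hj hk hjk hjnk
  rcases weak.lt_or_eq with h | h
  · exact h
  · exfalso
    obtain ⟨u, p, hu, hp, hplane⟩ := hcyc
    have hplane' : ∀ m, m ∈ Finset.Icc 1 n → pscal u (z m) = p := by
      intro m hm
      apply hplane
      simp only [Finset.mem_Icc] at hm
      exact ⟨m, by simp [Set.mem_Icc]; omega, rfl⟩
    have hne : z k ≠ z (nxt n k) := side_ne (by omega) hz hpos hk
    have hcyc' : Cocyc (z '' Set.Icc 1 n) := ⟨u, p, hu, hp, hplane⟩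
    rcases dep_two_eq (hz k hk) (hz _ (nxt_mem (by omega))) (hz j hj) hp
      (hplane' k hk) (hplane' _ (nxt_mem (by omega))) (hplane' j hj) hne h.symm with h1 | h1
    · exact pinch hn hz hpos hmax' hcyc' hj hk hjk h1
    · exact pinch hn hz hpos hmax' hcyc' hj (nxt_mem (by omega)) hjnk h1
end
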